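/- Let m = p^k for a prime p and k ≥ 1, and let T_f be an invertible linear cellular automaton on (ZMod p^k)^ℤ with local rule f(x_l,…,x_r) = Σ_{i=l}^{r} λ_i x_i (mod p^k), where j_p is the unique index with p ∤ λ_{j_p} and λ = λ_{j_p}. Then for every ℓ ∈ ℕ, every x ∈ (ZMod p^k)^ℤ, and every i ∈ ℤ, one has (T_f^{ℓ p^{k-1}} x)_i = λ^{ℓ p^k} · x_{i + ℓ p^{k-1} j_p}; that is, T_f^{ℓ p^{k-1}} acts as multiplication by the unit λ^{ℓ p^k} composed with the shift by ℓ p^{k-1} j_p. -/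

import Mathlib

/-- The linear cellular automaton on `(ZMod m)^ℤ` with local rule
`f(x_l, …, x_r) = Σ_{j=l}^{r} λ_j x_j (mod m)`. -/
noncomputable def cellAuto (m : ℕ) (l r : ℤ) (lam : ℤ → ZMod m) :
    (ℤ → ZMod m) → (ℤ → ZMod m) :=
  fun x i => ∑ j ∈ Finset.Icc l r, lam j * x (i + j)

namespace CAProof

open Finsupp AddMonoidAlgebra

variable {m : ℕ}

/-- Action of a Laurent polynomial (element of the monoid algebra over `ℤ`) on sequences. -/
noncomputable def ap (F : AddMonoidAlgebra (ZMod m) ℤ) (x : ℤ → ZMod m) (i : ℤ) : ZMod m :=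
  F.coeff.sum fun j a => a * x (i + j)

lemma ap_single (j : ℤ) (a : ZMod m) (x : ℤ → ZMod m) (i : ℤ) :
    ap (AddMonoidAlgebra.single j a) x i = a * x (i + j) :=
  Finsupp.sum_single_index (by simp)

lemma ap_zero (x : ℤ → ZMod m) (i : ℤ) : ap (0 : AddMonoidAlgebra (ZMod m) ℤ) x i = 0 :=
  Finsupp.sum_zero_index

lemma ap_add (F G : AddMonoidAlgebra (ZMod m) ℤ) (x : ℤ → ZMod m) (i : ℤ) :
    ap (F + G) x i = ap F x i + ap G x i :=
  Finsupp.sum_add_index (fun _ _ => zero_mul _) (fun _ _ _ _ => add_mul _ _ _)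

lemma ap_single_mul (j : ℤ) (a : ZMod m) (G : AddMonoidAlgebra (ZMod m) ℤ)
    (x : ℤ → ZMod m) (i : ℤ) :
    ap (AddMonoidAlgebra.single j a * G) x i = a * ap G x (i + j) := by
  induction G using AddMonoidAlgebra.induction_linear with
  | zero => simp [ap_zero]
  | add f g hf hg => rw [mul_add, ap_add, hf, hg, ap_add, mul_add]
  | single j' b =>
      rw [AddMonoidAlgebra.single_mul_single, ap_single, ap_single, mul_assoc, add_assoc]

lemma ap_mul (F G : AddMonoidAlgebra (ZMod m) ℤ) (x : ℤ → ZMod m) (i : ℤ) :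
    ap (F * G) x i = ap F (ap G x) i := by
  induction F using AddMonoidAlgebra.induction_linear with
  | zero => rw [zero_mul]; simp [ap_zero]
  | add f g hf hg => rw [add_mul, ap_add, hf, hg, ap_add]
  | single j a => rw [ap_single_mul, ap_single]

lemma ap_one (x : ℤ → ZMod m) (i : ℤ) : ap (1 : AddMonoidAlgebra (ZMod m) ℤ) x i = x i := by
  rw [AddMonoidAlgebra.one_def, ap_single, one_mul, add_zero]

lemma ap_sum (s : Finset ℤ) (c : ℤ → ZMod m) (x : ℤ → ZMod m) (i : ℤ) :
    ap (∑ j ∈ s, AddMonoidAlgebra.single j (c j)) x i = ∑ j ∈ s, c j * x (i + j) := by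
  induction s using Finset.induction_on with
  | empty => simp [ap_zero]
  | insert j s hns ih => rw [Finset.sum_insert hns, ap_add, ap_single,
      Finset.sum_insert hns, ih]

/-- The Laurent polynomial of the local rule. -/
noncomputable def Fpoly (l r : ℤ) (lam : ℤ → ZMod m) : AddMonoidAlgebra (ZMod m) ℤ :=
  ∑ j ∈ Finset.Icc l r, AddMonoidAlgebra.single j (lam j)

lemma cellAuto_eq (l r : ℤ) (lam : ℤ → ZMod m) (x : ℤ → ZMod m) :
    cellAuto m l r lam x = ap (Fpoly l r lam) x := by
  funext i
  rw [Fpoly, ap_sum]; rfl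

lemma iterate_eq (l r : ℤ) (lam : ℤ → ZMod m) (n : ℕ) (x : ℤ → ZMod m) :
    (cellAuto m l r lam)^[n] x = ap ((Fpoly l r lam) ^ n) x := by
  induction n with
  | zero => funext i; simp [ap_one]
  | succ n ih =>
      funext i
      rw [Function.iterate_succ_apply', ih, cellAuto_eq, ← ap_mul, ← pow_succ']

end CAProof

/-- For an invertible linear cellular automaton over `ZMod p^k` with unique permutative
index `j_p` (and `λ = λ_{j_p}`), the iterate `T_f^{ℓ p^{k-1}}` acts as multiplication by
the unit `λ^{ℓ p^k}` composed with the shift by `ℓ p^{k-1} j_p`: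
`(T_f^{ℓ p^{k-1}} x)_i = λ^{ℓ p^k} · x_{i + ℓ p^{k-1} j_p}`. -/
theorem iterate_mul_prime_pow_eq_shift
    (p k : ℕ) (hp : p.Prime) (hk : 1 ≤ k) (l r jp : ℤ) (hlr : l ≤ r)
    (lam : ℤ → ZMod (p ^ k))
    (hjp : l ≤ jp ∧ jp ≤ r ∧ ¬ (p : ℕ) ∣ (lam jp).val)
    (huniq : ∀ j : ℤ, l ≤ j → j ≤ r → ¬ (p : ℕ) ∣ (lam j).val → j = jp) :
    ∀ (ℓ : ℕ) (x : ℤ → ZMod (p ^ k)) (i : ℤ),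
      (cellAuto (p ^ k) l r lam)^[ℓ * p ^ (k - 1)] x i =
        (lam jp) ^ (ℓ * p ^ k) * x (i + ((ℓ * p ^ (k - 1) : ℕ) : ℤ) * jp) := by
  classical
  obtain ⟨hljp, hjpr, hnd⟩ := hjp
  have hpk0 : (p : ℕ) ^ k ≠ 0 := pow_ne_zero _ hp.pos.ne'
  haveI : NeZero (p ^ k) := ⟨hpk0⟩
  set R := AddMonoidAlgebra (ZMod (p ^ k)) ℤ
  set F : R := CAProof.Fpoly l r lam with hF
  set S : R := AddMonoidAlgebra.single jp (lam jp) with hS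
  -- p divides F - S
  have hdvd : (p : R) ∣ F - S := by
    have hmem : jp ∈ Finset.Icc l r := Finset.mem_Icc.mpr ⟨hljp, hjpr⟩
    have hsplit : F = S + ∑ j ∈ (Finset.Icc l r).erase jp, AddMonoidAlgebra.single j (lam j) := by
      rw [hF, CAProof.Fpoly, ← Finset.add_sum_erase _ _ hmem]
    rw [hsplit, add_sub_cancel_left]
    refine Finset.dvd_sum ?_
    intro j hj
    have hjmem := Finset.mem_of_mem_erase hj
    have hjne : j ≠ jp := Finset.ne_of_mem_erase hj
    have hpd : (p : ℕ) ∣ (lam j).val := by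
      by_contra h
      exact hjne (huniq j (Finset.mem_Icc.mp hjmem).1 (Finset.mem_Icc.mp hjmem).2 h)
    obtain ⟨c, hc⟩ := hpd
    refine ⟨AddMonoidAlgebra.single j ((c : ZMod (p ^ k))), ?_⟩
    have hcast : (p : R) = AddMonoidAlgebra.single (0 : ℤ) ((p : ZMod (p ^ k))) := by
      rw [AddMonoidAlgebra.natCast_def]
    rw [hcast, AddMonoidAlgebra.single_mul_single, zero_add]
    congr 1
    have : ((p : ℕ) : ZMod (p ^ k)) * (c : ZMod (p ^ k)) = (((p * c : ℕ)) : ZMod (p ^ k)) := by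
      push_cast; ring
    rw [this, ← hc, ZMod.natCast_val, ZMod.cast_id]
  -- the key identity F ^ p^(k-1) = S ^ p^(k-1)
  have hkey : F ^ p ^ (k - 1) = S ^ p ^ (k - 1) := by
    have h := dvd_sub_pow_of_dvd_sub hdvd (k - 1)
    rw [Nat.sub_add_cancel hk] at h
    have hz : ((p : R)) ^ k = 0 := by
      have : ((p ^ k : ℕ) : R) = 0 := by
        have := map_natCast (algebraMap (ZMod (p ^ k)) R) (p ^ k)
        rw [ZMod.natCast_self, map_zero] at this
        exact this.symm
      rw [Nat.cast_pow] at this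
      exact this
    rw [hz, zero_dvd_iff, sub_eq_zero] at h
    exact h
  -- lam jp is a unit, so lam jp ^ p^k = lam jp ^ p^(k-1)
  have hunit : IsUnit (lam jp) := by
    have : IsUnit (((lam jp).val : ℕ) : ZMod (p ^ k)) := by
      rw [ZMod.isUnit_iff_coprime]
      exact Nat.Coprime.pow_right _ ((Nat.Prime.coprime_iff_not_dvd hp).mpr hnd).symm
    rwa [ZMod.natCast_val, ZMod.cast_id] at this
  have hpoweq : (lam jp) ^ (p ^ k) = (lam jp) ^ (p ^ (k - 1)) := by
    obtain ⟨u, hu⟩ := hunit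
    have htot := ZMod.pow_totient u
    have hφ : Nat.totient (p ^ k) = p ^ (k - 1) * (p - 1) :=
      Nat.totient_prime_pow hp hk
    have hsplit : p ^ k = p ^ (k - 1) + p ^ (k - 1) * (p - 1) := by
      have h1 : p ^ k = p ^ (k - 1) * p := by
        conv_lhs => rw [← Nat.sub_add_cancel hk, pow_succ]
      have hp1 : 1 ≤ p := hp.pos
      have h2 : p = 1 + (p - 1) := by omega
      calc p ^ k = p ^ (k-1) * (1 + (p - 1)) := by rw [h1, ← h2]
        _ = p ^ (k-1) + p ^ (k-1) * (p - 1) := by ring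
    calc (lam jp) ^ (p ^ k) = (lam jp) ^ (p ^ (k-1)) * (lam jp) ^ (Nat.totient (p ^ k)) := by
          rw [← pow_add, hφ, ← hsplit]
      _ = (lam jp) ^ (p ^ (k-1)) := by
          have h1 : ((u : ZMod (p ^ k))) ^ Nat.totient (p ^ k) = 1 := by
            rw [← Units.val_pow_eq_pow_val, htot, Units.val_one]
          rw [← hu, h1, mul_one]
  intro ℓ x i
  rw [CAProof.iterate_eq, ← hF, pow_mul', hkey, ← pow_mul, hS, AddMonoidAlgebra.single_pow,
    CAProof.ap_single]
  congr 1
  · rw [pow_mul, ← hpoweq, ← pow_mul, mul_comm]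
  · congr 1
    rw [nsmul_eq_mul]
    push_cast
    ring
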